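/- Consider the error dynamics ė₂ = (x₉ − e₂ − x₂*)/(R₂C₂) + x₃(1−u₁)/C₂, ė₅ = (x₉ − e₅ − x₅*)/(R₅C₅) + x₆(1−u₂)/C₅, ẋ₉ = (1/C₉)[(e₂+x₂*−x₉)/R₂ + (e₅+x₅*−x₉)/R₅ + (x₇−x₉)/R₇ − x₉/R_L]. If x₇ is set equal to z₇ given in equation (42) (with x₉ ≠ 0), then the function V = (C₂/2)e₂² + (C₅/2)e₅² + (C₉/2)x₉² satisfies V̇ = −e₂²/R₂ − e₅²/R₅ − (x₉ − x₉*)²/R₇ ≤ 0. -/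

import Mathlib

/-- If `x₇` is set to the backstepping value `z₇`, then the Lyapunov function
`V = (C₂/2)e₂² + (C₅/2)e₅² + (C₉/2)x₉²` has derivative
`V̇ = −e₂²/R₂ − e₅²/R₅ − (x₉−x₉*)²/R₇ ≤ 0` along the error dynamics. -/
theorem stmt_5 (R₂ R₅ R₇ RL C₂ C₅ C₉ x₂s x₅s x₉s : ℝ)
    (hR₂ : 0 < R₂) (hR₅ : 0 < R₅) (hR₇ : 0 < R₇) (hRL : 0 < RL)
    (hC₂ : 0 < C₂) (hC₅ : 0 < C₅) (hC₉ : 0 < C₉) (hx₉s : 0 < x₉s)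
    (hbal : x₉s / RL = (x₂s - x₉s) / R₂ + (x₅s - x₉s) / R₅)
    (e₂ e₅ x₉ x₃ x₆ u₁ u₂ x₇ : ℝ → ℝ)
    (hx₉ne : ∀ t, x₉ t ≠ 0)
    (hx₇ : ∀ t, x₇ t =
      -R₇ * (1 / x₉ t) *
        (e₂ t * ((x₉ t - x₂s) / R₂ + x₃ t * (1 - u₁ t)) +
         e₅ t * ((x₉ t - x₅s) / R₅ + x₆ t * (1 - u₂ t))) +
      R₇ * (x₉ t / RL - (e₂ t + x₂s - x₉ t) / R₂ - (e₅ t + x₅s - x₉ t) / R₅) +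
      (1 / x₉ t) * (-(x₉s ^ 2) + 2 * x₉ t * x₉s))
    (hde₂ : ∀ t, HasDerivAt e₂
      ((x₉ t - e₂ t - x₂s) / (R₂ * C₂) + x₃ t * (1 - u₁ t) / C₂) t)
    (hde₅ : ∀ t, HasDerivAt e₅
      ((x₉ t - e₅ t - x₅s) / (R₅ * C₅) + x₆ t * (1 - u₂ t) / C₅) t)
    (hdx₉ : ∀ t, HasDerivAt x₉
      ((1 / C₉) * ((e₂ t + x₂s - x₉ t) / R₂ + (e₅ t + x₅s - x₉ t) / R₅ +
        (x₇ t - x₉ t) / R₇ - x₉ t / RL)) t) :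
    ∀ t, HasDerivAt (fun s => C₂ / 2 * (e₂ s) ^ 2 + C₅ / 2 * (e₅ s) ^ 2 +
        C₉ / 2 * (x₉ s) ^ 2)
      (-(e₂ t) ^ 2 / R₂ - (e₅ t) ^ 2 / R₅ - (x₉ t - x₉s) ^ 2 / R₇) t ∧
      -(e₂ t) ^ 2 / R₂ - (e₅ t) ^ 2 / R₅ - (x₉ t - x₉s) ^ 2 / R₇ ≤ 0 := by
  intro t
  constructor
  · have h := (((hde₂ t).pow 2).const_mul (C₂/2)).add
      ((((hde₅ t).pow 2).const_mul (C₅/2)).add (((hdx₉ t).pow 2).const_mul (C₉/2)))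
    convert h.congr_deriv ?_ using 2 with s
    · rfl
    · rfl
    · simp only [Pi.add_apply, Pi.pow_apply]
      ring
    · rw [hx₇ t]
      have h9 := hx₉ne t
      have h2 := hR₂.ne'
      have h5 := hR₅.ne'
      have h7 := hR₇.ne'
      have hL := hRL.ne'
      have hc2 := hC₂.ne'
      have hc5 := hC₅.ne'
      have hc9 := hC₉.ne'
      push_cast
      field_simp
      ring
  · have h2 : 0 ≤ (e₂ t) ^ 2 / R₂ := by positivity
    have h5 : 0 ≤ (e₅ t) ^ 2 / R₅ := by positivity
    have h9 : 0 ≤ (x₉ t - x₉s) ^ 2 / R₇ := by positivity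
    simp only [neg_div]
    linarith
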